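/- arXiv:2306.06324 — 2 statements merged into one kernel-verified Lean document; each statement's English description precedes it below -/
import Mathlib

section
/- Let ξ ~ N_p(0, Σ_ξ) be a centered Gaussian vector in ℝ^p with positive definite covariance Σ_ξ, and let v ∈ ℝ^p with ‖v‖₂ ≤ Δ. If ‖Σ_ξ^{-1}‖₂ ≤ (4·log(2/δ) + 2ε − 4·√((log(2/δ))² + ε·log(2/δ)))/Δ², then for every measurable set S ⊆ ℝ^p, P(ξ ∈ S) ≤ e^ε · P(ξ + v ∈ S) + δ. Consequently, the mechanism releasing f(D) + ξ for an algorithm f with l₂-sensitivity at most Δ is (ε,δ)-differentially private. -/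
open MeasureTheory Matrix

/-- Density of the centered multivariate Gaussian with covariance `S` at `x`. -/
noncomputable def gaussDensity {p : ℕ} (S : Matrix (Fin p) (Fin p) ℝ)
    (x : Fin p → ℝ) : ℝ :=
  (Real.sqrt ((2 * Real.pi) ^ p * S.det))⁻¹ *
    Real.exp (-(1 / 2) * (S⁻¹.mulVec x ⬝ᵥ x))

/-- Law of a centered multivariate Gaussian vector with covariance `S`. -/
noncomputable def gaussMeasure {p : ℕ} (S : Matrix (Fin p) (Fin p) ℝ) :
    Measure (Fin p → ℝ) :=
  volume.withDensity (fun x => ENNReal.ofReal (gaussDensity S x))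

/-! ### Auxiliary lemmas -/

lemma vgm_symm_dot {p : ℕ} {A : Matrix (Fin p) (Fin p) ℝ} (hA : Aᵀ = A) (v x : Fin p → ℝ) :
    A.mulVec v ⬝ᵥ x = v ⬝ᵥ A.mulVec x := by
  rw [dotProduct_comm, dotProduct_mulVec, ← Matrix.mulVec_transpose, hA, dotProduct_comm]

lemma vgm_quad_continuous {p : ℕ} (A : Matrix (Fin p) (Fin p) ℝ) :
    Continuous fun x : Fin p → ℝ => A.mulVec x ⬝ᵥ x := by
  simp only [dotProduct, Matrix.mulVec]; fun_prop

lemma vgm_dot_continuous {p : ℕ} (w : Fin p → ℝ) :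
    Continuous fun x : Fin p → ℝ => w ⬝ᵥ x := by
  simp only [dotProduct]; fun_prop

lemma vgm_density_nonneg {p : ℕ} (S : Matrix (Fin p) (Fin p) ℝ) (x : Fin p → ℝ) :
    0 ≤ gaussDensity S x := by
  unfold gaussDensity; positivity

lemma vgm_std_lintegral (p : ℕ) :
    ∫⁻ x : Fin p → ℝ, ENNReal.ofReal (Real.exp (-(1/2) * (x ⬝ᵥ x))) =
      ENNReal.ofReal (Real.sqrt ((2 * Real.pi) ^ p)) := by
  have hmp : MeasurePreserving (MeasurableEquiv.toLp 2 (Fin p → ℝ)).symm :=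
    EuclideanSpace.volume_preserving_symm_measurableEquiv_toLp (Fin p)
  have hnorm : ∀ z : EuclideanSpace ℝ (Fin p),
      ((MeasurableEquiv.toLp 2 (Fin p → ℝ)).symm z) ⬝ᵥ ((MeasurableEquiv.toLp 2 (Fin p → ℝ)).symm z)
        = ‖z‖ ^ 2 := by
    intro z
    rw [EuclideanSpace.norm_eq]
    rw [Real.sq_sqrt (by positivity)]
    simp [dotProduct, sq]
  have hint : Integrable (fun z : EuclideanSpace ℝ (Fin p) => Real.exp (-(1/2) * ‖z‖^2)) := by
    have := GaussianFourier.integrable_cexp_neg_mul_sq_norm_add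
      (V := EuclideanSpace ℝ (Fin p)) (b := (1/2 : ℂ)) (by norm_num) 0 0
    have h2 := this.norm
    have : (fun a : EuclideanSpace ℝ (Fin p) => Real.exp (-(2⁻¹ * ((‖a‖ : ℂ) ^ 2).re))) =
        (fun z : EuclideanSpace ℝ (Fin p) => Real.exp (-(1/2) * ‖z‖^2)) := by
      funext a
      norm_num [← Complex.ofReal_pow]
    rw [← this]
    simpa [Complex.norm_exp] using h2
  have hval : ∫ z : EuclideanSpace ℝ (Fin p), Real.exp (-(1/2) * ‖z‖^2)
      = Real.sqrt ((2 * Real.pi) ^ p) := by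
    have := GaussianFourier.integral_rexp_neg_mul_sq_norm (V := EuclideanSpace ℝ (Fin p))
      (b := (1/2 : ℝ)) (by norm_num)
    rw [this]
    rw [Real.sqrt_eq_rpow, ← Real.rpow_natCast (2*Real.pi) p, ← Real.rpow_mul (by positivity)]
    norm_num [div_eq_mul_inv, mul_comm]
  calc ∫⁻ x : Fin p → ℝ, ENNReal.ofReal (Real.exp (-(1/2) * (x ⬝ᵥ x)))
      = ∫⁻ z : EuclideanSpace ℝ (Fin p), ENNReal.ofReal (Real.exp (-(1/2) * ‖z‖^2)) := by
        have hmeas : Measurable fun x : Fin p → ℝ =>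
            ENNReal.ofReal (Real.exp (-(1/2) * (x ⬝ᵥ x))) := by
          have : Continuous fun x : Fin p → ℝ => x ⬝ᵥ x := by
            simp only [dotProduct]; fun_prop
          exact (ENNReal.measurable_ofReal.comp ((Real.continuous_exp.comp
            (continuous_const.mul this)).measurable))
        rw [← hmp.lintegral_comp hmeas]
        refine lintegral_congr fun z => ?_
        rw [hnorm z]
    _ = ENNReal.ofReal (Real.sqrt ((2 * Real.pi) ^ p)) := by
        rw [← ofReal_integral_eq_lintegral_ofReal hint
          (by filter_upwards with z using (Real.exp_pos _).le), hval]

open scoped MatrixOrder in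
/-- Total mass of the centered Gaussian measure is 1. -/
lemma vgm_gaussMass {p : ℕ} (Sξ : Matrix (Fin p) (Fin p) ℝ) (hPD : Sξ.PosDef) :
    ∫⁻ x, ENNReal.ofReal (gaussDensity Sξ x) = 1 := by
  set A := Sξ⁻¹ with hAdef
  have hApd : A.PosDef := hPD.inv
  have hApsd : A.PosSemidef := hApd.posSemidef
  set B := CFC.sqrt A with hBdef
  have hBB : B * B = A := CFC.sqrt_mul_sqrt_self A hApsd.nonneg
  have hBsym : Bᵀ = B := by
    have := (CFC.sqrt_nonneg A).posSemidef.1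
    exact (by simpa using this : (CFC.sqrt A).IsSymm).eq
  have hdS : 0 < Sξ.det := hPD.det_pos
  have hdA : A.det = Sξ.det⁻¹ := by rw [hAdef, Matrix.det_nonsing_inv, Ring.inverse_eq_inv']
  have hdB2 : B.det * B.det = A.det := by rw [← Matrix.det_mul, hBB]
  have hdBne : B.det ≠ 0 := by
    intro h
    rw [h, mul_zero] at hdB2
    rw [hdA] at hdB2
    exact (inv_pos.mpr hdS).ne hdB2
  have habsB : |B.det| = (Real.sqrt Sξ.det)⁻¹ := by
    have : |B.det| = Real.sqrt (B.det * B.det) := by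
      rw [← Real.sqrt_mul_self_eq_abs]
    rw [this, hdB2, hdA, ← Real.sqrt_inv]
  have hquad : ∀ x, A.mulVec x ⬝ᵥ x = (B.mulVec x) ⬝ᵥ (B.mulVec x) := by
    intro x
    conv_lhs => rw [← hBB, ← Matrix.mulVec_mulVec]
    rw [vgm_symm_dot hBsym]
  have hgm : Measurable fun y : Fin p → ℝ => ENNReal.ofReal (Real.exp (-(1/2) * (y ⬝ᵥ y))) := by
    have : Continuous fun x : Fin p → ℝ => x ⬝ᵥ x := by
      simp only [dotProduct]; fun_prop
    exact ENNReal.measurable_ofReal.comp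
      (Real.continuous_exp.comp (continuous_const.mul this)).measurable
  have hchg : ∫⁻ x, ENNReal.ofReal (Real.exp (-(1/2) * (A.mulVec x ⬝ᵥ x)))
      = ENNReal.ofReal (Real.sqrt Sξ.det) * ENNReal.ofReal (Real.sqrt ((2 * Real.pi) ^ p)) := by
    have hTB : Measurable (Matrix.toLin' B) :=
      LinearMap.continuous_of_finiteDimensional _ |>.measurable
    calc ∫⁻ x, ENNReal.ofReal (Real.exp (-(1/2) * (A.mulVec x ⬝ᵥ x)))
        = ∫⁻ x, ENNReal.ofReal
            (Real.exp (-(1/2) * ((Matrix.toLin' B x) ⬝ᵥ (Matrix.toLin' B x)))) := by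
          refine lintegral_congr fun x => ?_
          rw [hquad x]
          simp [Matrix.toLin'_apply]
      _ = ∫⁻ y, ENNReal.ofReal (Real.exp (-(1/2) * (y ⬝ᵥ y)))
            ∂(Measure.map (Matrix.toLin' B) volume) := by
          rw [lintegral_map hgm hTB]
      _ = ENNReal.ofReal |B.det|⁻¹ * ∫⁻ y, ENNReal.ofReal (Real.exp (-(1/2) * (y ⬝ᵥ y))) := by
          rw [Real.map_matrix_volume_pi_eq_smul_volume_pi hdBne, lintegral_smul_measure, abs_inv, smul_eq_mul]
      _ = ENNReal.ofReal (Real.sqrt Sξ.det) * ENNReal.ofReal (Real.sqrt ((2 * Real.pi) ^ p)) := by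
          rw [vgm_std_lintegral, habsB, inv_inv]
  have hexpm : Measurable fun x : Fin p → ℝ =>
      ENNReal.ofReal (Real.exp (-(1/2) * (A.mulVec x ⬝ᵥ x))) :=
    ENNReal.measurable_ofReal.comp
      (Real.continuous_exp.comp (continuous_const.mul (vgm_quad_continuous A))).measurable
  calc ∫⁻ x, ENNReal.ofReal (gaussDensity Sξ x)
      = ∫⁻ x, ENNReal.ofReal (Real.sqrt ((2 * Real.pi) ^ p * Sξ.det))⁻¹ *
          ENNReal.ofReal (Real.exp (-(1/2) * (A.mulVec x ⬝ᵥ x))) := by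
        refine lintegral_congr fun x => ?_
        rw [gaussDensity, ENNReal.ofReal_mul (by positivity)]
    _ = ENNReal.ofReal (Real.sqrt ((2 * Real.pi) ^ p * Sξ.det))⁻¹ *
          (ENNReal.ofReal (Real.sqrt Sξ.det) * ENNReal.ofReal (Real.sqrt ((2 * Real.pi) ^ p))) := by
        rw [lintegral_const_mul _ hexpm, hchg]
    _ = 1 := by
        rw [← ENNReal.ofReal_mul (by positivity), ← Real.sqrt_mul hdS.le,
          mul_comm Sξ.det, ← ENNReal.ofReal_mul (by positivity),
          inv_mul_cancel₀ (by positivity), ENNReal.ofReal_one]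

/-- Quadratic expansion for a symmetric matrix. -/
lemma vgm_expand {p : ℕ} {A : Matrix (Fin p) (Fin p) ℝ} (hA : Aᵀ = A) (y z : Fin p → ℝ) :
    A.mulVec (y + z) ⬝ᵥ (y + z) =
      A.mulVec y ⬝ᵥ y + 2 * (A.mulVec z ⬝ᵥ y) + A.mulVec z ⬝ᵥ z := by
  have h1 : A.mulVec y ⬝ᵥ z = A.mulVec z ⬝ᵥ y := by
    rw [vgm_symm_dot hA, dotProduct_comm]
  rw [Matrix.mulVec_add, add_dotProduct, dotProduct_add, dotProduct_add, h1]
  ring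

/-- Pointwise shift identity for the Gaussian density. -/
lemma vgm_density_shift {p : ℕ} {Sξ : Matrix (Fin p) (Fin p) ℝ}
    (hA : Sξ⁻¹ᵀ = Sξ⁻¹) (v x : Fin p → ℝ) :
    gaussDensity Sξ x =
      Real.exp ((Sξ⁻¹.mulVec v ⬝ᵥ v) / 2 - Sξ⁻¹.mulVec v ⬝ᵥ x) * gaussDensity Sξ (x - v) := by
  unfold gaussDensity
  rw [mul_comm (Real.exp _), mul_assoc, ← Real.exp_add]
  congr 1
  have : x - v = x + (-v) := by abel
  rw [this, vgm_expand hA x (-v)]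
  have h2 : Sξ⁻¹.mulVec (-v) ⬝ᵥ x = -(Sξ⁻¹.mulVec v ⬝ᵥ x) := by
    rw [Matrix.mulVec_neg, neg_dotProduct]
  have h3 : Sξ⁻¹.mulVec (-v) ⬝ᵥ (-v) = Sξ⁻¹.mulVec v ⬝ᵥ v := by
    rw [Matrix.mulVec_neg, neg_dotProduct, dotProduct_neg, neg_neg]
  rw [h2, h3]
  ring

/-- Exponential tilt: the moment generating function of the Gaussian. -/
lemma vgm_tilt {p : ℕ} (Sξ : Matrix (Fin p) (Fin p) ℝ) (hsym : Sξ.IsSymm) (hPD : Sξ.PosDef)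
    (u : Fin p → ℝ) :
    ∫⁻ x, ENNReal.ofReal (Real.exp (u ⬝ᵥ x) * gaussDensity Sξ x) =
      ENNReal.ofReal (Real.exp ((Sξ.mulVec u ⬝ᵥ u) / 2)) := by
  have hdet : IsUnit Sξ.det := isUnit_iff_ne_zero.mpr hPD.det_pos.ne'
  have hAsym : Sξ⁻¹ᵀ = Sξ⁻¹ := by
    rw [Matrix.transpose_nonsing_inv, hsym.eq]
  set m := Sξ.mulVec u with hm
  have hAm : Sξ⁻¹.mulVec m = u := by
    rw [hm, Matrix.mulVec_mulVec, Matrix.nonsing_inv_mul _ hdet, Matrix.one_mulVec]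
  have hmm : Sξ⁻¹.mulVec m ⬝ᵥ m = Sξ.mulVec u ⬝ᵥ u := by
    rw [hAm, hm, dotProduct_comm, vgm_symm_dot hsym.eq]
  have hpt : ∀ x, Real.exp (u ⬝ᵥ x) * gaussDensity Sξ x =
      Real.exp ((Sξ.mulVec u ⬝ᵥ u) / 2) * gaussDensity Sξ (x - m) := by
    intro x
    rw [vgm_density_shift hAsym m x, hmm, hAm, ← mul_assoc, ← Real.exp_add]
    have : u ⬝ᵥ x + (Sξ.mulVec u ⬝ᵥ u / 2 - u ⬝ᵥ x) = Sξ.mulVec u ⬝ᵥ u / 2 := by ring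
    rw [this]
  calc ∫⁻ x, ENNReal.ofReal (Real.exp (u ⬝ᵥ x) * gaussDensity Sξ x)
      = ∫⁻ x, ENNReal.ofReal (Real.exp ((Sξ.mulVec u ⬝ᵥ u) / 2)) *
          ENNReal.ofReal (gaussDensity Sξ (x - m)) := by
        refine lintegral_congr fun x => ?_
        rw [hpt x, ENNReal.ofReal_mul (Real.exp_pos _).le]
    _ = ENNReal.ofReal (Real.exp ((Sξ.mulVec u ⬝ᵥ u) / 2)) *
          ∫⁻ x, ENNReal.ofReal (gaussDensity Sξ (x - m)) := by
        rw [lintegral_const_mul' _ _ ENNReal.ofReal_ne_top]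
    _ = ENNReal.ofReal (Real.exp ((Sξ.mulVec u ⬝ᵥ u) / 2)) := by
        have : ∫⁻ x, ENNReal.ofReal (gaussDensity Sξ (x - m)) = 1 := by
          have := lintegral_add_right_eq_self (μ := volume)
            (fun x => ENNReal.ofReal (gaussDensity Sξ x)) (-m)
          simp only [← sub_eq_add_neg] at this
          rw [this, vgm_gaussMass Sξ hPD]
        rw [this, mul_one]


lemma vgm_cpos {ε L s : ℝ} (hε : 0 < ε) (hL : 0 < L) (hs0 : 0 ≤ s)
    (hs2 : s ^ 2 = L ^ 2 + ε * L) : 0 < 4 * L + 2 * ε - 4 * s := by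
  by_contra h
  push_neg at h
  have h2 : (4 * L + 2 * ε) ^ 2 ≤ (4 * s) ^ 2 := by nlinarith
  nlinarith

lemma vgm_clt {ε L s : ℝ} (hε : 0 < ε) (hL : 0 < L) (hs0 : 0 ≤ s)
    (hs2 : s ^ 2 = L ^ 2 + ε * L) : 4 * L + 2 * ε - 4 * s < 2 * ε := by
  by_contra h
  push_neg at h
  have h2 : s ^ 2 ≤ L ^ 2 := by nlinarith
  nlinarith

lemma vgm_key {ε L s η : ℝ} (hε : 0 < ε) (hL : 0 < L) (hs0 : 0 ≤ s)
    (hs2 : s ^ 2 = L ^ 2 + ε * L) (hη0 : 0 < η) (hηc : η ≤ 4 * L + 2 * ε - 4 * s) :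
    L * (2 * η) ≤ (ε - η / 2) ^ 2 := by
  have h1 : (0:ℝ) ≤ 4 * L + 2 * ε + 4 * s - η := by linarith
  nlinarith [mul_nonneg (sub_nonneg.mpr hηc) h1]

/-- The vectorized Gaussian mechanism is `(ε,δ)`-differentially private: if the noise
covariance `Σ_ξ` is symmetric positive definite with
`‖Σ_ξ⁻¹‖₂ ≤ (4 log(2/δ) + 2ε − 4√((log(2/δ))² + ε log(2/δ)))/Δ²` (operator norm bound
expressed via the quadratic form), then for every shift `v` with `‖v‖₂ ≤ Δ` and every
measurable `S`, `P(ξ ∈ S) ≤ e^ε P(ξ + v ∈ S) + δ`; consequently adding noise `ξ` to any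
algorithm `f` with l₂-sensitivity at most `Δ` yields an `(ε,δ)`-DP mechanism. -/
theorem vgm_mechanism_dp {p : ℕ} (ε δ Δ : ℝ)
    (hε : 0 < ε) (hδ0 : 0 < δ) (hδ1 : δ < 1) (hΔ : 0 < Δ)
    (Sξ : Matrix (Fin p) (Fin p) ℝ) (hsym : Sξ.IsSymm) (hPD : Sξ.PosDef)
    (hop : ∀ x : Fin p → ℝ, Sξ⁻¹.mulVec x ⬝ᵥ x ≤
      ((4 * Real.log (2 / δ) + 2 * ε -
          4 * Real.sqrt ((Real.log (2 / δ)) ^ 2 + ε * Real.log (2 / δ))) / Δ ^ 2) *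
        (x ⬝ᵥ x)) :
    (∀ v : Fin p → ℝ, Real.sqrt (v ⬝ᵥ v) ≤ Δ →
      ∀ S : Set (Fin p → ℝ), MeasurableSet S →
        gaussMeasure Sξ S ≤
          ENNReal.ofReal (Real.exp ε) * gaussMeasure Sξ ((fun x => x + v) ⁻¹' S) +
            ENNReal.ofReal δ) ∧
    (∀ (𝒟 : Type) (adj : 𝒟 → 𝒟 → Prop) (f : 𝒟 → Fin p → ℝ),
      (∀ D D', adj D D' → Real.sqrt ((f D - f D') ⬝ᵥ (f D - f D')) ≤ Δ) →
      ∀ D D', adj D D' → ∀ S : Set (Fin p → ℝ), MeasurableSet S →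
        (gaussMeasure Sξ).map (fun x => f D + x) S ≤
          ENNReal.ofReal (Real.exp ε) * (gaussMeasure Sξ).map (fun x => f D' + x) S +
            ENNReal.ofReal δ) := by
  have hAsym : Sξ⁻¹ᵀ = Sξ⁻¹ := by
    rw [Matrix.transpose_nonsing_inv, hsym.eq]
  have hdet : IsUnit Sξ.det := isUnit_iff_ne_zero.mpr hPD.det_pos.ne'
  set L := Real.log (2 / δ) with hLdef
  have hL0 : 0 < L := Real.log_pos (by rw [lt_div_iff₀ hδ0]; linarith)
  set s := Real.sqrt (L ^ 2 + ε * L) with hsdef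
  have hs2 : s ^ 2 = L ^ 2 + ε * L := Real.sq_sqrt (by positivity)
  have hs0 : 0 ≤ s := Real.sqrt_nonneg _
  set c := 4 * L + 2 * ε - 4 * s with hcdef
  have hcpos : 0 < c := by rw [hcdef]; exact vgm_cpos hε hL0 hs0 hs2
  have hclt : c < 2 * ε := by rw [hcdef]; exact vgm_clt hε hL0 hs0 hs2
  have main : ∀ v : Fin p → ℝ, Real.sqrt (v ⬝ᵥ v) ≤ Δ →
      ∀ S : Set (Fin p → ℝ), MeasurableSet S →
        gaussMeasure Sξ S ≤
          ENNReal.ofReal (Real.exp ε) * gaussMeasure Sξ ((fun x => x + v) ⁻¹' S) +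
            ENNReal.ofReal δ := by
    intro v hv S hS
    have hone_le : (1 : ENNReal) ≤ ENNReal.ofReal (Real.exp ε) := by
      rw [← ENNReal.ofReal_one]
      exact ENNReal.ofReal_le_ofReal (Real.one_le_exp hε.le)
    by_cases hv0 : v = 0
    · subst hv0
      have hpre : (fun x : Fin p → ℝ => x + 0) ⁻¹' S = S := by
        simp
      rw [hpre]
      calc gaussMeasure Sξ S = 1 * gaussMeasure Sξ S := (one_mul _).symm
        _ ≤ ENNReal.ofReal (Real.exp ε) * gaussMeasure Sξ S :=
            mul_le_mul_left hone_le _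
        _ ≤ _ := le_self_add
    · set w := Sξ⁻¹.mulVec v with hwdef
      set η := Sξ⁻¹.mulVec v ⬝ᵥ v with hηdef
      have hη0 : 0 < η := by
        have := hPD.inv.dotProduct_mulVec_pos hv0
        simpa [hηdef, dotProduct_comm] using this
      have hvv : v ⬝ᵥ v ≤ Δ ^ 2 := by
        have hnn : 0 ≤ v ⬝ᵥ v := by
          simp only [dotProduct]
          exact Finset.sum_nonneg fun i _ => mul_self_nonneg _
        nlinarith [Real.sq_sqrt hnn, Real.sqrt_nonneg (v ⬝ᵥ v)]
      have hηc : η ≤ c := by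
        have h1 := hop v
        have h2 : (c / Δ ^ 2) * (v ⬝ᵥ v) ≤ c := by
          rw [div_mul_eq_mul_div, mul_comm, ← div_mul_eq_mul_div]
          calc v ⬝ᵥ v / Δ ^ 2 * c ≤ 1 * c := by
                apply mul_le_mul_of_nonneg_right _ hcpos.le
                rw [div_le_one (by positivity)]
                exact hvv
            _ = c := one_mul c
        exact le_trans h1 h2
      set t' := ε - η / 2 with ht'def
      have ht'pos : 0 < t' := by rw [ht'def]; linarith
      set lam := t' / η with hlamdef
      have hlampos : 0 < lam := div_pos ht'pos hη0
      -- the good set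
      set G := {x : Fin p → ℝ | η / 2 - ε ≤ w ⬝ᵥ x} with hGdef
      have hGmeas : MeasurableSet G :=
        measurableSet_le measurable_const (vgm_dot_continuous w).measurable
      have hsplit : gaussMeasure Sξ S = gaussMeasure Sξ (S ∩ G) + gaussMeasure Sξ (S \ G) :=
        (measure_inter_add_diff S hGmeas).symm
      -- good part
      have hgood : gaussMeasure Sξ (S ∩ G) ≤
          ENNReal.ofReal (Real.exp ε) * gaussMeasure Sξ ((fun x => x + v) ⁻¹' S) := by
        have hpre_meas : MeasurableSet ((fun x : Fin p → ℝ => x + v) ⁻¹' S) :=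
          hS.preimage (measurable_id.add_const v)
        calc gaussMeasure Sξ (S ∩ G)
            = ∫⁻ x, Set.indicator (S ∩ G) (fun x => ENNReal.ofReal (gaussDensity Sξ x)) x := by
              rw [gaussMeasure, withDensity_apply _ (hS.inter hGmeas),
                ← lintegral_indicator (hS.inter hGmeas)]
          _ ≤ ∫⁻ x, ENNReal.ofReal (Real.exp ε) *
                Set.indicator S (fun y => ENNReal.ofReal (gaussDensity Sξ (y - v))) x := by
              refine lintegral_mono fun x => ?_
              by_cases hx : x ∈ S ∩ G
              · rw [Set.indicator_of_mem hx, Set.indicator_of_mem hx.1]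
                rw [vgm_density_shift hAsym v x]
                rw [ENNReal.ofReal_mul (Real.exp_pos _).le]
                apply mul_le_mul_left
                apply ENNReal.ofReal_le_ofReal
                apply Real.exp_le_exp.mpr
                have := hx.2
                rw [hGdef] at this
                simp only [Set.mem_setOf_eq] at this
                rw [← hηdef, ← hwdef]
                linarith
              · rw [Set.indicator_of_notMem hx]
                exact zero_le
          _ = ENNReal.ofReal (Real.exp ε) *
                ∫⁻ x, Set.indicator S (fun y => ENNReal.ofReal (gaussDensity Sξ (y - v))) x :=
              lintegral_const_mul' _ _ ENNReal.ofReal_ne_top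
          _ = ENNReal.ofReal (Real.exp ε) *
                ∫⁻ x, Set.indicator ((fun y => y + v) ⁻¹' S)
                  (fun y => ENNReal.ofReal (gaussDensity Sξ y)) x := by
              congr 1
              rw [← lintegral_add_right_eq_self
                (fun x => Set.indicator S (fun y => ENNReal.ofReal (gaussDensity Sξ (y - v))) x) v]
              refine lintegral_congr fun x => ?_
              by_cases hx : x + v ∈ S
              · rw [Set.indicator_of_mem hx, Set.indicator_of_mem (by exact hx)]
                simp
              · rw [Set.indicator_of_notMem hx, Set.indicator_of_notMem (by exact hx)]
          _ = ENNReal.ofReal (Real.exp ε) * gaussMeasure Sξ ((fun x => x + v) ⁻¹' S) := by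
              rw [gaussMeasure, withDensity_apply _ hpre_meas, ← lintegral_indicator hpre_meas]
      -- bad part
      have hbad : gaussMeasure Sξ (S \ G) ≤ ENNReal.ofReal δ := by
        have hsub : gaussMeasure Sξ (S \ G) ≤ gaussMeasure Sξ Gᶜ :=
          measure_mono fun x hx => hx.2
      -- Chernoff bound on Gᶜ
        have hGc : gaussMeasure Sξ Gᶜ ≤ ENNReal.ofReal (Real.exp (-(t' ^ 2) / (2 * η))) := by
          set u := (-lam) • w with hudef
          have hSw : Sξ.mulVec w = v := by
            rw [hwdef, Matrix.mulVec_mulVec, Matrix.mul_nonsing_inv _ hdet, Matrix.one_mulVec]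
          have hSu : Sξ.mulVec u ⬝ᵥ u = lam ^ 2 * η := by
            rw [hudef, Matrix.mulVec_smul, smul_dotProduct, dotProduct_smul, hSw,
              smul_eq_mul, smul_eq_mul]
            have hvw : v ⬝ᵥ w = η := by rw [hwdef, hηdef, dotProduct_comm]
            rw [hvw]
            ring
          calc gaussMeasure Sξ Gᶜ
              = ∫⁻ x, Set.indicator Gᶜ (fun x => ENNReal.ofReal (gaussDensity Sξ x)) x := by
                rw [gaussMeasure, withDensity_apply _ hGmeas.compl,
                  ← lintegral_indicator hGmeas.compl]
            _ ≤ ∫⁻ x, ENNReal.ofReal (Real.exp (-lam * t')) *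
                  ENNReal.ofReal (Real.exp (u ⬝ᵥ x) * gaussDensity Sξ x) := by
                refine lintegral_mono fun x => ?_
                by_cases hx : x ∈ Gᶜ
                · rw [Set.indicator_of_mem hx]
                  rw [← ENNReal.ofReal_mul (Real.exp_pos _).le]
                  apply ENNReal.ofReal_le_ofReal
                  rw [← mul_assoc, ← Real.exp_add]
                  have hxlt : w ⬝ᵥ x < η / 2 - ε := by
                    have := hx
                    simp only [hGdef, Set.mem_compl_iff, Set.mem_setOf_eq, not_le] at this
                    exact this
                  have hux : u ⬝ᵥ x = -lam * (w ⬝ᵥ x) := by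
                    rw [hudef, smul_dotProduct, smul_eq_mul]
                  have h1 : (1 : ℝ) ≤ Real.exp (-lam * t' + u ⬝ᵥ x) := by
                    rw [Real.one_le_exp_iff, hux, ht'def]
                    nlinarith [mul_pos hlampos (show (0:ℝ) < η / 2 - ε - w ⬝ᵥ x by linarith)]
                  nlinarith [vgm_density_nonneg Sξ x, Real.exp_pos (-lam * t' + u ⬝ᵥ x)]
                · rw [Set.indicator_of_notMem hx]
                  exact zero_le
            _ = ENNReal.ofReal (Real.exp (-lam * t')) *
                  ENNReal.ofReal (Real.exp ((Sξ.mulVec u ⬝ᵥ u) / 2)) := by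
                rw [lintegral_const_mul' _ _ ENNReal.ofReal_ne_top,
                  vgm_tilt Sξ hsym hPD u]
            _ = ENNReal.ofReal (Real.exp (-(t' ^ 2) / (2 * η))) := by
                rw [← ENNReal.ofReal_mul (Real.exp_pos _).le, ← Real.exp_add, hSu]
                congr 2
                rw [hlamdef]
                field_simp
                ring
        have hfinal : Real.exp (-(t' ^ 2) / (2 * η)) ≤ δ := by
          have hLle : L ≤ t' ^ 2 / (2 * η) := by
            rw [le_div_iff₀ (mul_pos two_pos hη0), ht'def]
            exact vgm_key hε hL0 hs0 hs2 hη0 (by linarith)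
          have : Real.exp (-(t' ^ 2) / (2 * η)) ≤ Real.exp (-L) := by
            apply Real.exp_le_exp.mpr
            rw [neg_div]
            linarith
          have hexpL : Real.exp (-L) = δ / 2 := by
            rw [hLdef, Real.exp_neg, Real.exp_log (by positivity)]
            field_simp
          linarith
        exact hsub.trans (hGc.trans (ENNReal.ofReal_le_ofReal hfinal))
      rw [hsplit]
      exact add_le_add hgood hbad
  refine ⟨main, ?_⟩
  intro 𝒟 adj f hsens D D' hadj S hS
  have hmeas1 : Measurable (fun x : Fin p → ℝ => f D + x) := measurable_const.add measurable_id
  have hmeas2 : Measurable (fun x : Fin p → ℝ => f D' + x) := measurable_const.add measurable_id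
  rw [Measure.map_apply hmeas1 hS, Measure.map_apply hmeas2 hS]
  set v := f D' - f D with hvdef
  have hvnorm : Real.sqrt (v ⬝ᵥ v) ≤ Δ := by
    have h1 := hsens D D' hadj
    have : v ⬝ᵥ v = (f D - f D') ⬝ᵥ (f D - f D') := by
      rw [hvdef]
      have : f D' - f D = -(f D - f D') := by abel
      rw [this, neg_dotProduct, dotProduct_neg, neg_neg]
    rw [this]
    exact h1
  have key := main v hvnorm ((fun x : Fin p → ℝ => f D + x) ⁻¹' S)
    (hS.preimage hmeas1)
  have hseteq : (fun x : Fin p → ℝ => x + v) ⁻¹' ((fun x : Fin p → ℝ => f D + x) ⁻¹' S) =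
      (fun x : Fin p → ℝ => f D' + x) ⁻¹' S := by
    ext x
    simp only [Set.mem_preimage]
    have : f D + (x + v) = f D' + x := by rw [hvdef]; ring
    rw [this]
  rw [hseteq] at key
  exact key
end

section
/- Let X be a p-dimensional random vector with E(X) = 0 and invertible covariance Σ, let Y be a random variable, and let β ∈ ℝ^{p×d} with E(X | β^T X) = P_β(Σ)^T X almost surely, where P_β(Σ) = β(β^T Σ β)^{-1} β^T Σ is the Σ-orthogonal projection onto span(β). If Y is conditionally independent of X given β^T X, then for every event A in the σ-algebra of Y, the vector Σ^{-1} E[X · 1_A(Y)] lies in the column space of β. -/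
open MeasureTheory ProbabilityTheory Matrix
open scoped NNReal ENNReal

/-- Unbiasedness of sliced inverse regression under the linear conditional mean
condition: if `E(X | βᵀX) = P_β(Σ)ᵀ X` a.s. (with `P_β(Σ) = β(βᵀΣβ)⁻¹βᵀΣ`) and `Y` is
conditionally independent of `X` given `βᵀX`, then for every event `A` of `Y`,
`Σ⁻¹ E[X·1_A(Y)]` lies in the column space of `β`. -/
theorem sir_unbiasedness
    {Ω : Type} [MeasurableSpace Ω] [StandardBorelSpace Ω]
    (μ : Measure Ω) [IsProbabilityMeasure μ]
    {p d : ℕ} {𝒴 : Type} [MeasurableSpace 𝒴]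
    (X : Ω → Fin p → ℝ) (hXmeas : Measurable X) (hXint : Integrable X μ)
    (hX2 : ∀ i j : Fin p, Integrable (fun ω => X ω i * X ω j) μ)
    (hEX : (∫ ω, X ω ∂μ) = 0)
    (Y : Ω → 𝒴) (hYmeas : Measurable Y)
    (S : Matrix (Fin p) (Fin p) ℝ)
    (hScov : ∀ i j, S i j = ∫ ω, X ω i * X ω j ∂μ) (hS : IsUnit S.det)
    (β : Matrix (Fin p) (Fin d) ℝ) (hβrank : LinearIndependent ℝ βᵀ) (hdp : d < p)
    (hle : MeasurableSpace.comap (fun ω => βᵀ.mulVec (X ω)) inferInstance ≤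
      (inferInstance : MeasurableSpace Ω))
    (hLCM : ∀ j : Fin p,
      μ[(fun ω => X ω j) |
          MeasurableSpace.comap (fun ω => βᵀ.mulVec (X ω)) inferInstance] =ᵐ[μ]
        fun ω => (β * (βᵀ * S * β)⁻¹ * βᵀ * S)ᵀ.mulVec (X ω) j)
    (hCI : CondIndepFun
      (MeasurableSpace.comap (fun ω => βᵀ.mulVec (X ω)) inferInstance) hle Y X μ) :
    ∀ A : Set 𝒴, MeasurableSet A →
      S⁻¹.mulVec (∫ ω, Set.indicator A (fun _ => (1 : ℝ)) (Y ω) • X ω ∂μ) ∈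
        Submodule.span ℝ (Set.range βᵀ) := by
  classical
  intro A hA
  set P : Matrix (Fin p) (Fin p) ℝ := β * (βᵀ * S * β)⁻¹ * βᵀ * S with hPdef
  have hmX : (MeasurableSpace.comap X inferInstance) ≤ ‹MeasurableSpace Ω› := hXmeas.comap_le
  -- `(MeasurableSpace.comap (fun ω => βᵀ.mulVec (X ω)) inferInstance) ≤ (MeasurableSpace.comap X inferInstance)`
  have hmulmeas : Measurable fun v : Fin p → ℝ => βᵀ.mulVec v :=
    (LinearMap.continuous_of_finiteDimensional (Matrix.mulVecLin βᵀ)).measurable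
  have hGmX : (MeasurableSpace.comap (fun ω => βᵀ.mulVec (X ω)) inferInstance) ≤ (MeasurableSpace.comap X inferInstance) := by
    have h1 : (fun ω => βᵀ.mulVec (X ω)) = (fun v : Fin p → ℝ => βᵀ.mulVec v) ∘ X := rfl
    rw [h1, ← MeasurableSpace.comap_comp]
    exact MeasurableSpace.comap_mono hmulmeas.comap_le
  have hXmX : Measurable[(MeasurableSpace.comap X inferInstance)] X := Measurable.of_comap_le le_rfl
  -- the slice indicator
  set B : Set Ω := Y ⁻¹' A with hBdef
  have hB : MeasurableSet B := hYmeas hA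
  set fB : Ω → ℝ := B.indicator fun _ => (1 : ℝ) with hfBdef
  have hfBmeas : Measurable fB := measurable_const.indicator hB
  have hfBbd : ∀ ω, ‖fB ω‖ ≤ 1 := by
    intro ω; by_cases h : ω ∈ B <;> simp [hfBdef, h]
  have hfBint : Integrable fB μ :=
    (memLp_top_of_bound hfBmeas.aestronglyMeasurable 1 (ae_of_all μ hfBbd)).integrable le_top
  have he_sm : StronglyMeasurable[(MeasurableSpace.comap (fun ω => βᵀ.mulVec (X ω)) inferInstance)] (μ[fB|(MeasurableSpace.comap (fun ω => βᵀ.mulVec (X ω)) inferInstance)]) := stronglyMeasurable_condExp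
  have he_bd : ∀ᵐ ω ∂μ, ‖(μ[fB|(MeasurableSpace.comap (fun ω => βᵀ.mulVec (X ω)) inferInstance)]) ω‖ ≤ 1 := by
    have h1 : ∀ᵐ ω ∂μ, |fB ω| ≤ ((1 : ℝ≥0) : ℝ) := ae_of_all μ fun ω => by
      simpa [Real.norm_eq_abs] using hfBbd ω
    have := ae_bdd_condExp_of_ae_bdd (m := (MeasurableSpace.comap (fun ω => βᵀ.mulVec (X ω)) inferInstance)) h1
    filter_upwards [this] with ω hω
    simpa [Real.norm_eq_abs] using hω
  -- integrability of components
  have hXj : ∀ j : Fin p, Integrable (fun ω => X ω j) μ := fun j => by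
    have := (ContinuousLinearMap.proj (R := ℝ) (φ := fun _ : Fin p => ℝ) j).integrable_comp hXint
    simpa using this
  have hXj_mX : ∀ j : Fin p, StronglyMeasurable[(MeasurableSpace.comap X inferInstance)] (fun ω => X ω j) := fun j =>
    ((measurable_pi_apply j).comp hXmX).stronglyMeasurable
  have hfBXk : ∀ k : Fin p, Integrable (fun ω => fB ω * X ω k) μ := fun k =>
    (hXj k).bdd_mul hfBmeas.aestronglyMeasurable (ae_of_all μ hfBbd)
  -- conditional independence
  have hCI' := (condIndepFun_iff_condExp_inter_preimage_eq_mul (hm' := hle)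
      hYmeas hXmeas).mp hCI
  -- key: `μ[fB|(MeasurableSpace.comap (fun ω => βᵀ.mulVec (X ω)) inferInstance)]` integrates like `fB` on `(MeasurableSpace.comap X inferInstance)`-measurable sets
  have key : ∀ t : Set (Fin p → ℝ), MeasurableSet t →
      ∫ ω in X ⁻¹' t, (μ[fB|(MeasurableSpace.comap (fun ω => βᵀ.mulVec (X ω)) inferInstance)]) ω ∂μ = ∫ ω in X ⁻¹' t, fB ω ∂μ := by
    intro t ht
    have hXt : MeasurableSet (X ⁻¹' t) := hXmeas ht
    set gt : Ω → ℝ := (X ⁻¹' t).indicator fun _ => (1 : ℝ) with hgtdef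
    have hgtmeas : Measurable gt := measurable_const.indicator hXt
    have hgtbd : ∀ ω, ‖gt ω‖ ≤ 1 := by
      intro ω; by_cases h : ω ∈ X ⁻¹' t <;> simp [hgtdef, h]
    have hgtint : Integrable gt μ :=
      (memLp_top_of_bound hgtmeas.aestronglyMeasurable 1 (ae_of_all μ hgtbd)).integrable le_top
    have hegt_int : Integrable (μ[fB|(MeasurableSpace.comap (fun ω => βᵀ.mulVec (X ω)) inferInstance)] * gt) μ :=
      hgtint.bdd_mul (he_sm.mono hle).aestronglyMeasurable he_bd
    have hL1 : ∫ ω in X ⁻¹' t, (μ[fB|(MeasurableSpace.comap (fun ω => βᵀ.mulVec (X ω)) inferInstance)]) ω ∂μ = ∫ ω, ((μ[fB|(MeasurableSpace.comap (fun ω => βᵀ.mulVec (X ω)) inferInstance)]) * gt) ω ∂μ := by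
      rw [← integral_indicator hXt]
      congr 1; funext ω
      by_cases h : ω ∈ X ⁻¹' t <;> simp [hgtdef, h]
    have hpull : μ[(μ[fB|(MeasurableSpace.comap (fun ω => βᵀ.mulVec (X ω)) inferInstance)]) * gt|(MeasurableSpace.comap (fun ω => βᵀ.mulVec (X ω)) inferInstance)] =ᵐ[μ] (μ[fB|(MeasurableSpace.comap (fun ω => βᵀ.mulVec (X ω)) inferInstance)]) * μ[gt|(MeasurableSpace.comap (fun ω => βᵀ.mulVec (X ω)) inferInstance)] :=
      condExp_mul_of_stronglyMeasurable_left he_sm hegt_int hgtint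
    have hprod : (fun ω => (μ[fB|(MeasurableSpace.comap (fun ω => βᵀ.mulVec (X ω)) inferInstance)]) ω * (μ[gt|(MeasurableSpace.comap (fun ω => βᵀ.mulVec (X ω)) inferInstance)]) ω)
        =ᵐ[μ] μ[(B ∩ X ⁻¹' t).indicator (fun _ => (1 : ℝ))|(MeasurableSpace.comap (fun ω => βᵀ.mulVec (X ω)) inferInstance)] := (hCI' A t hA ht).symm
    have hL : ∫ ω in X ⁻¹' t, (μ[fB|(MeasurableSpace.comap (fun ω => βᵀ.mulVec (X ω)) inferInstance)]) ω ∂μ = (μ (B ∩ X ⁻¹' t)).toReal := by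
      calc ∫ ω in X ⁻¹' t, (μ[fB|(MeasurableSpace.comap (fun ω => βᵀ.mulVec (X ω)) inferInstance)]) ω ∂μ
          = ∫ ω, ((μ[fB|(MeasurableSpace.comap (fun ω => βᵀ.mulVec (X ω)) inferInstance)]) * gt) ω ∂μ := hL1
        _ = ∫ ω, (μ[(μ[fB|(MeasurableSpace.comap (fun ω => βᵀ.mulVec (X ω)) inferInstance)]) * gt|(MeasurableSpace.comap (fun ω => βᵀ.mulVec (X ω)) inferInstance)]) ω ∂μ := (integral_condExp hle).symm
        _ = ∫ ω, ((μ[fB|(MeasurableSpace.comap (fun ω => βᵀ.mulVec (X ω)) inferInstance)]) * μ[gt|(MeasurableSpace.comap (fun ω => βᵀ.mulVec (X ω)) inferInstance)]) ω ∂μ := integral_congr_ae hpull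
        _ = ∫ ω, (μ[(B ∩ X ⁻¹' t).indicator (fun _ => (1 : ℝ))|(MeasurableSpace.comap (fun ω => βᵀ.mulVec (X ω)) inferInstance)]) ω ∂μ := integral_congr_ae hprod
        _ = ∫ ω, (B ∩ X ⁻¹' t).indicator (fun _ => (1 : ℝ)) ω ∂μ := integral_condExp hle
        _ = (μ (B ∩ X ⁻¹' t)).toReal := integral_indicator_one (hB.inter hXt)
    have hR : ∫ ω in X ⁻¹' t, fB ω ∂μ = (μ (B ∩ X ⁻¹' t)).toReal := by
      calc ∫ ω in X ⁻¹' t, fB ω ∂μ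
          = ((μ.restrict (X ⁻¹' t)) B).toReal := integral_indicator_one hB
        _ = (μ (B ∩ X ⁻¹' t)).toReal := by rw [Measure.restrict_apply hB]
    rw [hL, hR]
  -- `μ[fB|(MeasurableSpace.comap (fun ω => βᵀ.mulVec (X ω)) inferInstance)]` is a version of `μ[fB|(MeasurableSpace.comap X inferInstance)]`
  have he' : μ[fB|(MeasurableSpace.comap (fun ω => βᵀ.mulVec (X ω)) inferInstance)] =ᵐ[μ] μ[fB|(MeasurableSpace.comap X inferInstance)] := by
    refine ae_eq_condExp_of_forall_setIntegral_eq hmX hfBint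
      (fun s _ _ => integrable_condExp.integrableOn) ?_
      (he_sm.mono hGmX).aestronglyMeasurable
    intro s hs _
    obtain ⟨t, ht, rfl⟩ := MeasurableSpace.measurableSet_comap.mp hs
    exact key t ht
  -- swapping `fB` with its conditional expectation against `(MeasurableSpace.comap X inferInstance)`-measurable functions
  have hswap : ∀ w : Ω → ℝ, StronglyMeasurable[(MeasurableSpace.comap X inferInstance)] w → Integrable w μ →
      ∫ ω, fB ω * w ω ∂μ = ∫ ω, (μ[fB|(MeasurableSpace.comap (fun ω => βᵀ.mulVec (X ω)) inferInstance)]) ω * w ω ∂μ := by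
    intro w hwm hwint
    have h1 : Integrable (fun ω => fB ω * w ω) μ :=
      hwint.bdd_mul hfBmeas.aestronglyMeasurable (ae_of_all μ hfBbd)
    have h2 : Integrable (w * fB) μ :=
      h1.congr (Filter.Eventually.of_forall fun ω => mul_comm _ _)
    have hpull : μ[w * fB|(MeasurableSpace.comap X inferInstance)] =ᵐ[μ] w * μ[fB|(MeasurableSpace.comap X inferInstance)] :=
      condExp_mul_of_stronglyMeasurable_left hwm h2 hfBint
    have hchain : ∫ ω, (w * fB) ω ∂μ = ∫ ω, (w * μ[fB|(MeasurableSpace.comap X inferInstance)]) ω ∂μ := by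
      rw [← integral_condExp hmX, integral_congr_ae hpull]
    have hback : ∫ ω, (w * μ[fB|(MeasurableSpace.comap X inferInstance)]) ω ∂μ = ∫ ω, (μ[fB|(MeasurableSpace.comap (fun ω => βᵀ.mulVec (X ω)) inferInstance)]) ω * w ω ∂μ := by
      refine integral_congr_ae ?_
      filter_upwards [he'] with ω hω
      simp [Pi.mul_apply, ← hω, mul_comm]
    calc ∫ ω, fB ω * w ω ∂μ = ∫ ω, (w * fB) ω ∂μ := by
          simp only [Pi.mul_apply]; exact integral_congr_ae
            (Filter.Eventually.of_forall fun ω => mul_comm _ _)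
      _ = ∫ ω, (w * μ[fB|(MeasurableSpace.comap X inferInstance)]) ω ∂μ := hchain
      _ = ∫ ω, (μ[fB|(MeasurableSpace.comap (fun ω => βᵀ.mulVec (X ω)) inferInstance)]) ω * w ω ∂μ := hback
  -- the LCM step
  have hstep5 : ∀ j : Fin p,
      ∫ ω, (μ[fB|(MeasurableSpace.comap (fun ω => βᵀ.mulVec (X ω)) inferInstance)]) ω * X ω j ∂μ = ∫ ω, (μ[fB|(MeasurableSpace.comap (fun ω => βᵀ.mulVec (X ω)) inferInstance)]) ω * Pᵀ.mulVec (X ω) j ∂μ := by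
    intro j
    have hint : Integrable ((μ[fB|(MeasurableSpace.comap (fun ω => βᵀ.mulVec (X ω)) inferInstance)]) * fun ω => X ω j) μ :=
      (hXj j).bdd_mul (he_sm.mono hle).aestronglyMeasurable he_bd
    have hpull : μ[(μ[fB|(MeasurableSpace.comap (fun ω => βᵀ.mulVec (X ω)) inferInstance)]) * (fun ω => X ω j)|(MeasurableSpace.comap (fun ω => βᵀ.mulVec (X ω)) inferInstance)]
        =ᵐ[μ] (μ[fB|(MeasurableSpace.comap (fun ω => βᵀ.mulVec (X ω)) inferInstance)]) * μ[(fun ω => X ω j)|(MeasurableSpace.comap (fun ω => βᵀ.mulVec (X ω)) inferInstance)] :=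
      condExp_mul_of_stronglyMeasurable_left he_sm hint (hXj j)
    have h2 : ((μ[fB|(MeasurableSpace.comap (fun ω => βᵀ.mulVec (X ω)) inferInstance)]) * μ[(fun ω => X ω j)|(MeasurableSpace.comap (fun ω => βᵀ.mulVec (X ω)) inferInstance)])
        =ᵐ[μ] fun ω => (μ[fB|(MeasurableSpace.comap (fun ω => βᵀ.mulVec (X ω)) inferInstance)]) ω * Pᵀ.mulVec (X ω) j := by
      filter_upwards [hLCM j] with ω hω
      simp [Pi.mul_apply, hω]
    calc ∫ ω, (μ[fB|(MeasurableSpace.comap (fun ω => βᵀ.mulVec (X ω)) inferInstance)]) ω * X ω j ∂μ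
        = ∫ ω, ((μ[fB|(MeasurableSpace.comap (fun ω => βᵀ.mulVec (X ω)) inferInstance)]) * fun ω => X ω j) ω ∂μ := by simp [Pi.mul_apply]
      _ = ∫ ω, (μ[(μ[fB|(MeasurableSpace.comap (fun ω => βᵀ.mulVec (X ω)) inferInstance)]) * (fun ω => X ω j)|(MeasurableSpace.comap (fun ω => βᵀ.mulVec (X ω)) inferInstance)]) ω ∂μ := (integral_condExp hle).symm
      _ = ∫ ω, (μ[fB|(MeasurableSpace.comap (fun ω => βᵀ.mulVec (X ω)) inferInstance)]) ω * Pᵀ.mulVec (X ω) j ∂μ :=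
          integral_congr_ae (hpull.trans h2)
  -- integrability & measurability of `(PᵀX)_j`
  have hPXj_int : ∀ j, Integrable (fun ω => Pᵀ.mulVec (X ω) j) μ := by
    intro j
    simp only [Matrix.mulVec, dotProduct]
    exact integrable_finset_sum _ fun k _ => (hXj k).const_mul _
  have hPXj_mX : ∀ j, StronglyMeasurable[(MeasurableSpace.comap X inferInstance)] (fun ω => Pᵀ.mulVec (X ω) j) := by
    intro j
    have : Measurable[(MeasurableSpace.comap X inferInstance)] (fun ω => Pᵀ.mulVec (X ω) j) := by
      simp only [Matrix.mulVec, dotProduct]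
      exact Finset.measurable_sum _ fun k _ =>
        (((measurable_pi_apply k).comp hXmX).const_mul _)
    exact this.stronglyMeasurable
  -- the integral vector
  have hcomp : ∀ ω, Set.indicator A (fun _ => (1 : ℝ)) (Y ω) = fB ω := by
    intro ω
    by_cases h : Y ω ∈ A <;> simp [hfBdef, hBdef, Set.indicator, h]
  have hmint : Integrable (fun ω => fB ω • X ω) μ :=
    hXint.smul_of_top_right
      (memLp_top_of_bound hfBmeas.aestronglyMeasurable 1 (ae_of_all μ hfBbd))
  have hm_apply : ∀ j, (∫ ω, fB ω • X ω ∂μ) j = ∫ ω, fB ω * X ω j ∂μ := by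
    intro j
    have h := (ContinuousLinearMap.proj (R := ℝ) (φ := fun _ : Fin p => ℝ) j).integral_comp_comm
      hmint
    simpa [smul_eq_mul] using h.symm
  have hPm : ∀ j, ∫ ω, fB ω * Pᵀ.mulVec (X ω) j ∂μ
      = Pᵀ.mulVec (∫ ω, fB ω • X ω ∂μ) j := by
    intro j
    have expand : ∀ ω, fB ω * Pᵀ.mulVec (X ω) j = ∑ k, Pᵀ j k * (fB ω * X ω k) := by
      intro ω
      simp only [Matrix.mulVec, dotProduct, Finset.mul_sum]
      exact Finset.sum_congr rfl fun k _ => by ring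
    simp_rw [expand]
    rw [integral_finset_sum _ fun k _ => ((hfBXk k).const_mul _)]
    simp_rw [integral_const_mul]
    simp only [Matrix.mulVec, dotProduct, hm_apply]
  -- the fixed-point identity
  have hfixed : (∫ ω, fB ω • X ω ∂μ) = Pᵀ.mulVec (∫ ω, fB ω • X ω ∂μ) := by
    funext j
    calc (∫ ω, fB ω • X ω ∂μ) j = ∫ ω, fB ω * X ω j ∂μ := hm_apply j
      _ = ∫ ω, (μ[fB|(MeasurableSpace.comap (fun ω => βᵀ.mulVec (X ω)) inferInstance)]) ω * X ω j ∂μ := hswap _ (hXj_mX j) (hXj j)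
      _ = ∫ ω, (μ[fB|(MeasurableSpace.comap (fun ω => βᵀ.mulVec (X ω)) inferInstance)]) ω * Pᵀ.mulVec (X ω) j ∂μ := hstep5 j
      _ = ∫ ω, fB ω * Pᵀ.mulVec (X ω) j ∂μ := (hswap _ (hPXj_mX j) (hPXj_int j)).symm
      _ = Pᵀ.mulVec (∫ ω, fB ω • X ω ∂μ) j := hPm j
  -- linear algebra
  have hSsym : Sᵀ = S := by
    ext i j
    rw [Matrix.transpose_apply, hScov, hScov]
    exact integral_congr_ae (Filter.Eventually.of_forall fun ω => mul_comm _ _)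
  have halg : S⁻¹ * Pᵀ = β * (((βᵀ * S * β)⁻¹)ᵀ * βᵀ) := by
    rw [hPdef, Matrix.transpose_mul, Matrix.transpose_mul, Matrix.transpose_mul,
      Matrix.transpose_transpose, hSsym, ← Matrix.mul_assoc,
      Matrix.nonsing_inv_mul S hS, Matrix.one_mul]
  simp only [hcomp]
  rw [hfixed, Matrix.mulVec_mulVec, halg, ← Matrix.mulVec_mulVec]
  have hvec : β.mulVec ((((βᵀ * S * β)⁻¹)ᵀ * βᵀ).mulVec (∫ ω, fB ω • X ω ∂μ))
      = ∑ i : Fin d, ((((βᵀ * S * β)⁻¹)ᵀ * βᵀ).mulVec (∫ ω, fB ω • X ω ∂μ)) i • βᵀ i := by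
    funext j
    simp [Matrix.mulVec, dotProduct, Finset.sum_apply, Matrix.transpose_apply, mul_comm]
  rw [hvec]
  exact Submodule.sum_mem _ fun i _ =>
    Submodule.smul_mem _ _ (Submodule.subset_span ⟨i, rfl⟩)
end
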